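/- Let V be an n-dimensional real inner product space and θ a positive definite quadratic form on V (so all eigenvalues λ_1 ≤ ... ≤ λ_n of its matrix are positive). Then for every p-form g = Σ_J g_J ω^J one has ⟨F_θ^{-1} g, g⟩ ≤ p^{-2} Σ_{j,k} Σ_K θ^{jk} g_{jK} g_{kK}, where (θ^{jk}) is the inverse matrix of (θ_{jk}) and K runs over strictly increasing multi-indices of length p−1. -/

import Mathlib

open Finset


/-- The operator `F_θ = Σ θ_{jk} ω^k ∧ (e_j ⌟ ·)` on coefficient arrays of `p`-forms. -/
def FopMat {n p : ℕ} (θ : Matrix (Fin n) (Fin n) ℝ)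
    (g : (Fin p → Fin n) → ℝ) : (Fin p → Fin n) → ℝ :=
  fun J => ∑ a : Fin p, ∑ i : Fin n, θ (J a) i * g (Function.update J a i)

/-- `g` is the fully antisymmetric coefficient array of a form. -/
def IsAlt {n p : ℕ} (g : (Fin p → Fin n) → ℝ) : Prop :=
  ∀ (J : Fin p → Fin n) (σ : Equiv.Perm (Fin p)),
    g (J ∘ σ) = ((Equiv.Perm.sign σ : ℤ) : ℝ) * g J

/-- Inner product of `p`-forms (increasing-multi-index basis orthonormal). -/
noncomputable def innerF {n p : ℕ} (f g : (Fin p → Fin n) → ℝ) : ℝ :=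
  ((Nat.factorial p : ℝ))⁻¹ * ∑ J : Fin p → Fin n, f J * g J


lemma sum_pi_succ' {n p : ℕ} (f : (Fin (p+1) → Fin n) → ℝ) :
    ∑ J : Fin (p+1) → Fin n, f J
      = ∑ j : Fin n, ∑ K : Fin p → Fin n, f (Fin.cons j K) := by
  rw [show (∑ J : Fin (p+1) → Fin n, f J)
      = ∑ x : Fin n × (Fin p → Fin n), f (Fin.cons x.1 x.2) from
    Fintype.sum_equiv (Fin.consEquiv (fun _ : Fin (p+1) => Fin n)).symm _ _ fun J => by
      simp [Fin.consEquiv], Fintype.sum_prod_type]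

lemma sum_comp_perm' {n p : ℕ} (f : (Fin (p+1) → Fin n) → ℝ) (σ : Equiv.Perm (Fin (p+1))) :
    ∑ J : Fin (p+1) → Fin n, f (J ∘ σ) = ∑ J : Fin (p+1) → Fin n, f J :=
  Fintype.sum_equiv (Equiv.arrowCongr σ.symm (Equiv.refl (Fin n))) _ _ fun _ => rfl

lemma bsum_nonneg' {ι : Type} [Fintype ι] {n : ℕ} {θ : Matrix (Fin n) (Fin n) ℝ}
    (hθ : θ.PosDef) (z : ι → Fin n → ℝ) :
    0 ≤ ∑ K : ι, ∑ j : Fin n, ∑ i : Fin n, θ j i * z K j * z K i := by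
  refine Finset.sum_nonneg fun K _ => ?_
  have h := hθ.posSemidef.dotProduct_mulVec_nonneg (z K)
  simpa [dotProduct, Matrix.mulVec, Finset.mul_sum, mul_comm, mul_assoc, mul_left_comm]
    using h

lemma cs_aux' {ι : Type} [Fintype ι] {n : ℕ} {θ : Matrix (Fin n) (Fin n) ℝ}
    (hθ : θ.PosDef) (x y : ι → Fin n → ℝ) :
    (∑ K : ι, ∑ j : Fin n, ∑ i : Fin n, θ j i * x K j * y K i) ^ 2
      ≤ (∑ K : ι, ∑ j : Fin n, ∑ i : Fin n, θ j i * x K j * x K i) *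
        (∑ K : ι, ∑ j : Fin n, ∑ i : Fin n, θ j i * y K j * y K i) := by
  have hsym : ∀ j i : Fin n, θ j i = θ i j := fun j i => by simpa using hθ.1.apply i j
  set Bxx := ∑ K : ι, ∑ j : Fin n, ∑ i : Fin n, θ j i * x K j * x K i with hBxx
  set Byy := ∑ K : ι, ∑ j : Fin n, ∑ i : Fin n, θ j i * y K j * y K i with hByy
  set Bxy := ∑ K : ι, ∑ j : Fin n, ∑ i : Fin n, θ j i * x K j * y K i with hBxy
  have hswap : (∑ K : ι, ∑ j : Fin n, ∑ i : Fin n, θ j i * y K j * x K i) = Bxy := by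
    rw [hBxy]
    refine Finset.sum_congr rfl fun K _ => ?_
    rw [Finset.sum_comm]
    exact Finset.sum_congr rfl fun j _ => Finset.sum_congr rfl fun i _ => by rw [hsym i j]; ring
  have expand : ∀ t : ℝ,
      (∑ K : ι, ∑ j : Fin n, ∑ i : Fin n, θ j i * (x K j + t * y K j) * (x K i + t * y K i))
        = Byy * t ^ 2 + 2 * Bxy * t + Bxx := by
    intro t
    have hpt : ∀ (K : ι) (j i : Fin n),
        θ j i * (x K j + t * y K j) * (x K i + t * y K i)
          = θ j i * x K j * x K i + t * (θ j i * x K j * y K i)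
            + t * (θ j i * y K j * x K i) + t ^ 2 * (θ j i * y K j * y K i) := by
      intros; ring
    simp only [hpt, Finset.sum_add_distrib, ← Finset.mul_sum]
    rw [hswap, ← hBxx, ← hByy, ← hBxy]
    ring
  have hquad : ∀ t : ℝ, 0 ≤ Byy * (t * t) + 2 * Bxy * t + Bxx := by
    intro t
    have h := bsum_nonneg' hθ (fun K j => x K j + t * y K j)
    rw [expand t] at h
    nlinarith [h]
  have hd := discrim_le_zero hquad
  rw [discrim] at hd
  nlinarith [hd]

/-- For a positive definite quadratic form `θ` and a form `g` of degree `p+1`,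
`⟨F_θ⁻¹ g, g⟩ ≤ (p+1)⁻² Σ_{j,k,K} θ^{jk} g_{jK} g_{kK}`, where `u = F_θ⁻¹ g`
(i.e. `F_θ u = g`) and `(θ^{jk})` is the inverse matrix of `(θ_{jk})`.
(`K` runs over multi-indices of length one less than the degree.) -/
theorem stmt8 (n p : ℕ) (θ : Matrix (Fin n) (Fin n) ℝ) (hθ : θ.PosDef)
    (g : (Fin (p + 1) → Fin n) → ℝ) (hg : IsAlt g)
    (u : (Fin (p + 1) → Fin n) → ℝ) (hu : IsAlt u) (hFu : FopMat θ u = g) :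
    innerF u g
      ≤ (((p : ℝ) + 1) ^ 2)⁻¹ * (((Nat.factorial p : ℝ))⁻¹ *
          ∑ j : Fin n, ∑ k : Fin n, ∑ K : Fin p → Fin n,
            θ⁻¹ j k * (g (Fin.cons j K) * g (Fin.cons k K))) := by
  classical
  have hsym : ∀ j i : Fin n, θ j i = θ i j := fun j i => by simpa using hθ.1.apply i j
  have hθinv : θ * θ⁻¹ = 1 :=
    Matrix.mul_nonsing_inv θ (isUnit_iff_ne_zero.mpr hθ.det_pos.ne')
  set v : (Fin p → Fin n) → Fin n → ℝ := fun K j => u (Fin.cons j K) with hv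
  set w : (Fin p → Fin n) → Fin n → ℝ := fun K j => g (Fin.cons j K) with hw
  set a : (Fin p → Fin n) → Fin n → ℝ := fun K i => ∑ k, θ⁻¹ i k * w K k with ha
  -- θ applied to a reproduces w
  have hθa : ∀ (K : Fin p → Fin n) (j : Fin n), ∑ i, θ j i * a K i = w K j := by
    intro K j
    have h1 : ∀ k, (∑ i, θ j i * θ⁻¹ i k) = (1 : Matrix (Fin n) (Fin n) ℝ) j k := by
      intro k; rw [← Matrix.mul_apply, hθinv]
    calc ∑ i, θ j i * a K i
        = ∑ k, (∑ i, θ j i * θ⁻¹ i k) * w K k := by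
          simp only [ha, Finset.mul_sum, Finset.sum_mul]
          rw [Finset.sum_comm]
          exact Finset.sum_congr rfl fun i _ => Finset.sum_congr rfl fun k _ => by ring
      _ = ∑ k, (1 : Matrix (Fin n) (Fin n) ℝ) j k * w K k := by
          exact Finset.sum_congr rfl fun k _ => by rw [h1 k]
      _ = w K j := by simp [Matrix.one_apply]
  -- the swap lemma
  have hL1 : ∀ b : Fin (p+1),
      (∑ J : Fin (p+1) → Fin n, u J * ∑ i, θ (J b) i * u (Function.update J b i))
        = ∑ J : Fin (p+1) → Fin n, u J * ∑ i, θ (J 0) i * u (Function.update J 0 i) := by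
    intro b
    set σ : Equiv.Perm (Fin (p+1)) := Equiv.swap 0 b with hσ
    set s : ℝ := ((Equiv.Perm.sign σ : ℤ) : ℝ) with hs
    have hss : s * s = 1 := by
      rcases Int.units_eq_one_or (Equiv.Perm.sign σ) with h | h <;> rw [hs, h] <;> norm_num
    rw [← sum_comp_perm' (fun J => u J * ∑ i, θ (J b) i * u (Function.update J b i)) σ]
    refine Finset.sum_congr rfl fun J _ => ?_
    have hJb : (J ∘ σ) b = J 0 := by simp [hσ, Equiv.swap_apply_right]
    have hupd : ∀ i, Function.update (J ∘ σ) b i = Function.update J 0 i ∘ σ := by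
      intro i
      rw [Function.update_comp_equiv J σ 0 i]
      congr 1
    have h1 : u (J ∘ σ) = s * u J := hu J σ
    have h3 : ∀ i, u (Function.update (J ∘ σ) b i) = s * u (Function.update J 0 i) := by
      intro i; rw [hupd i]; exact hu _ σ
    calc u (J ∘ σ) * ∑ i, θ ((J ∘ σ) b) i * u (Function.update (J ∘ σ) b i)
        = (s * u J) * ∑ i, θ (J 0) i * (s * u (Function.update J 0 i)) := by
          rw [h1, hJb]
          congr 1
          exact Finset.sum_congr rfl fun i _ => by rw [h3 i]
      _ = u J * ∑ i, θ (J 0) i * u (Function.update J 0 i) := by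
          rw [Finset.mul_sum, Finset.mul_sum]
          refine Finset.sum_congr rfl fun i _ => ?_
          linear_combination (u J * (θ (J 0) i * u (Function.update J 0 i))) * hss
  -- total sum T
  set T : ℝ := ∑ J : Fin (p+1) → Fin n, u J * g J with hT
  set S1 : ℝ := ∑ K : Fin p → Fin n, ∑ j, ∑ i, θ j i * v K j * v K i with hS1
  set S2 : ℝ := ∑ K : Fin p → Fin n, ∑ j, ∑ i, θ j i * a K j * a K i with hS2
  -- T = (p+1) * S1
  have hC : T = ((p : ℝ) + 1) * S1 := by
    have hg' : ∀ J, g J = ∑ b : Fin (p+1), ∑ i, θ (J b) i * u (Function.update J b i) := by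
      intro J; rw [← hFu]; rfl
    calc T = ∑ J : Fin (p+1) → Fin n, ∑ b : Fin (p+1),
              u J * ∑ i, θ (J b) i * u (Function.update J b i) := by
          rw [hT]
          exact Finset.sum_congr rfl fun J _ => by rw [hg' J, Finset.mul_sum]
      _ = ∑ b : Fin (p+1), ∑ J : Fin (p+1) → Fin n,
              u J * ∑ i, θ (J b) i * u (Function.update J b i) := Finset.sum_comm
      _ = ∑ _b : Fin (p+1), ∑ J : Fin (p+1) → Fin n,
              u J * ∑ i, θ (J 0) i * u (Function.update J 0 i) :=
          Finset.sum_congr rfl fun b _ => hL1 b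
      _ = ((p : ℝ) + 1) * ∑ J : Fin (p+1) → Fin n,
              u J * ∑ i, θ (J 0) i * u (Function.update J 0 i) := by
          rw [Finset.sum_const, card_univ, Fintype.card_fin, nsmul_eq_mul]
          push_cast; ring
      _ = ((p : ℝ) + 1) * S1 := by
          congr 1
          rw [sum_pi_succ' (fun J => u J * ∑ i, θ (J 0) i * u (Function.update J 0 i))]
          rw [hS1, Finset.sum_comm]
          refine Finset.sum_congr rfl fun j _ => Finset.sum_congr rfl fun K _ => ?_
          simp only [Fin.cons_zero, Fin.update_cons_zero]
          rw [Finset.mul_sum]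
          exact Finset.sum_congr rfl fun i _ => by simp only [hv]; ring
  -- T = Σ_K Σ_j v w
  have hD : T = ∑ K : Fin p → Fin n, ∑ j, v K j * w K j := by
    rw [hT, sum_pi_succ' (fun J => u J * g J), Finset.sum_comm]
  -- B(v,a) = T
  have hBva : (∑ K : Fin p → Fin n, ∑ j, ∑ i, θ j i * v K j * a K i) = T := by
    rw [hD]
    refine Finset.sum_congr rfl fun K _ => Finset.sum_congr rfl fun j _ => ?_
    calc ∑ i, θ j i * v K j * a K i = v K j * ∑ i, θ j i * a K i := by
          rw [Finset.mul_sum]; exact Finset.sum_congr rfl fun i _ => by ring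
      _ = v K j * w K j := by rw [hθa]
  -- S2 equals the RHS double sum
  have hS2w : S2 = ∑ j : Fin n, ∑ k : Fin n, ∑ K : Fin p → Fin n,
      θ⁻¹ j k * (g (Fin.cons j K) * g (Fin.cons k K)) := by
    have step : S2 = ∑ K : Fin p → Fin n, ∑ j, ∑ k, θ⁻¹ j k * (w K j * w K k) := by
      rw [hS2]
      refine Finset.sum_congr rfl fun K _ => ?_
      rw [Finset.sum_comm]
      refine Finset.sum_congr rfl fun i _ => ?_
      calc ∑ j, θ j i * a K j * a K i = (∑ j, θ i j * a K j) * a K i := by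
            rw [Finset.sum_mul]
            exact Finset.sum_congr rfl fun j _ => by rw [hsym j i]
        _ = w K i * a K i := by
            rw [show (∑ j, θ i j * a K j) = w K i from hθa K i]
        _ = ∑ k, θ⁻¹ i k * (w K i * w K k) := by
            simp only [ha, Finset.mul_sum]
            exact Finset.sum_congr rfl fun k _ => by ring
    rw [step, Finset.sum_comm]
    refine Finset.sum_congr rfl fun j _ => Finset.sum_comm
  -- Cauchy-Schwarz
  have hcs := cs_aux' hθ v a
  rw [hBva, ← hS2] at hcs
  -- hcs : T ^ 2 ≤ S1 * S2
  have hS1nn : 0 ≤ S1 := bsum_nonneg' hθ v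
  have hS2nn : 0 ≤ S2 := bsum_nonneg' hθ a
  -- innerF u g = (p!)⁻¹ * S1
  have hinner : innerF u g = ((Nat.factorial p : ℝ))⁻¹ * S1 := by
    rw [innerF, ← hT, hC, Nat.factorial_succ]
    have hfac : ((Nat.factorial p : ℝ)) ≠ 0 := by
      exact_mod_cast (Nat.factorial_pos p).ne'
    push_cast
    field_simp
  have hcs2 : T ^ 2 ≤ S1 * S2 := by rw [hS1]; exact hcs
  have hq : (0:ℝ) < ((p : ℝ) + 1) ^ 2 := by positivity
  have key : ((p : ℝ) + 1) ^ 2 * S1 ≤ S2 := by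
    rcases eq_or_lt_of_le hS1nn with h0 | h0
    · rw [← h0, mul_zero]; exact hS2nn
    · have hcs' : (((p : ℝ) + 1) * S1) ^ 2 ≤ S1 * S2 := by rw [← hC]; exact hcs2
      nlinarith [hcs', h0]
  have hfin : S1 ≤ (((p : ℝ) + 1) ^ 2)⁻¹ * S2 := by
    have h2 := mul_le_mul_of_nonneg_left key (le_of_lt (inv_pos.mpr hq))
    rwa [← mul_assoc, inv_mul_cancel₀ hq.ne', one_mul] at h2
  have hcnn : (0:ℝ) ≤ ((Nat.factorial p : ℝ))⁻¹ := by positivity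
  rw [hinner, ← hS2w]
  calc ((Nat.factorial p : ℝ))⁻¹ * S1
      ≤ ((Nat.factorial p : ℝ))⁻¹ * ((((p : ℝ) + 1) ^ 2)⁻¹ * S2) :=
        mul_le_mul_of_nonneg_left hfin hcnn
    _ = (((p : ℝ) + 1) ^ 2)⁻¹ * (((Nat.factorial p : ℝ))⁻¹ * S2) := by ring
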